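/- Let (χ, μ) be a probability space, logit: ℝ^{d_h} × ℝ^{d_h} × ℝ^{d_p} → ℝ Lipschitz with constant L_logit (with respect to the sum of the Euclidean norms of the three arguments), and v: ℝ^{d_h} → ℝ^{d_h} Lipschitz with constant L_v and v(0) = 0. Let h, ĥ: χ → ℝ^{d_h} and p, p̂: χ × χ → ℝ^{d_p} be bounded measurable, and for a pair (g, q) define next_{g,q}(x) = ∫_χ Att_{g,q}(x,y)·v(g(y)) dμ(y), where Att_{g,q}(x,y) = exp(logit(g(x), g(y), q(x,y))) / ∫_χ exp(logit(g(x), g(z), q(x,z))) dμ(z). Assume 2·sup_x ‖h(x) − ĥ(x)‖₂ + sup_{x,y} ‖p(x,y) − p̂(x,y)‖₂ ≤ 1/(2·L_logit). Then sup_x ‖next_{ĥ,p̂}(x) − next_{h,p}(x)‖₂ ≤ 4·L_v·(L_logit·‖h‖_∞ + 1)·(2·sup_x ‖h(x) − ĥ(x)‖₂ + sup_{x,y} ‖p(x,y) − p̂(x,y)‖₂), where ‖h‖_∞ = sup_x ‖h(x)‖₂. -/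

import Mathlib

open MeasureTheory

theorem attention_perturb_key
    {χ : Type*} [MeasurableSpace χ] (μ : Measure χ) [IsProbabilityMeasure μ]
    {E : Type*} [NormedAddCommGroup E] [NormedSpace ℝ E] [CompleteSpace E]
    (ℓ ℓ' : χ → ℝ) (w w' : χ → E)
    (hℓ : Measurable ℓ) (hℓ' : Measurable ℓ')
    (B : ℝ) (hB : ∀ y, |ℓ y| ≤ B) (hB' : ∀ y, |ℓ' y| ≤ B)
    (hw : AEStronglyMeasurable w μ) (hw' : AEStronglyMeasurable w' μ)
    (t : ℝ) (ht0 : 0 ≤ t) (hdiff : ∀ y, |ℓ' y - ℓ y| ≤ t)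
    (a b : ℝ) (ha : 0 ≤ a) (hb : 0 ≤ b)
    (hdv : ∀ y, ‖w' y - w y‖ ≤ a) (hnv : ∀ y, ‖w y‖ ≤ b) :
    ‖(∫ y, (Real.exp (ℓ' y) / ∫ z, Real.exp (ℓ' z) ∂μ) • w' y ∂μ) -
      (∫ y, (Real.exp (ℓ y) / ∫ z, Real.exp (ℓ z) ∂μ) • w y ∂μ)‖ ≤
    a + (Real.exp (2 * t) - 1) * b := by
  set I : ℝ := ∫ z, Real.exp (ℓ z) ∂μ with hI
  set I' : ℝ := ∫ z, Real.exp (ℓ' z) ∂μ with hI'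
  have int_f : Integrable (fun y => Real.exp (ℓ y)) μ := by
    refine Integrable.mono' (integrable_const (Real.exp B))
      (Real.measurable_exp.comp hℓ).aestronglyMeasurable (ae_of_all _ fun y => ?_)
    rw [Real.norm_eq_abs, abs_of_pos (Real.exp_pos _)]
    exact Real.exp_le_exp.2 ((le_abs_self _).trans (hB y))
  have int_f' : Integrable (fun y => Real.exp (ℓ' y)) μ := by
    refine Integrable.mono' (integrable_const (Real.exp B))
      (Real.measurable_exp.comp hℓ').aestronglyMeasurable (ae_of_all _ fun y => ?_)
    rw [Real.norm_eq_abs, abs_of_pos (Real.exp_pos _)]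
    exact Real.exp_le_exp.2 ((le_abs_self _).trans (hB' y))
  have Ilb : Real.exp (-B) ≤ I := by
    calc Real.exp (-B) = ∫ _, Real.exp (-B) ∂μ := by simp
    _ ≤ I := integral_mono (integrable_const _) int_f fun y =>
        Real.exp_le_exp.2 (neg_le_of_abs_le (hB y) : -B ≤ ℓ y)
  have I'lb0 : Real.exp (-B) ≤ I' := by
    calc Real.exp (-B) = ∫ _, Real.exp (-B) ∂μ := by simp
    _ ≤ I' := integral_mono (integrable_const _) int_f' fun y =>
        Real.exp_le_exp.2 (neg_le_of_abs_le (hB' y) : -B ≤ ℓ' y)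
  have Ipos : 0 < I := lt_of_lt_of_le (Real.exp_pos _) Ilb
  have I'pos : 0 < I' := lt_of_lt_of_le (Real.exp_pos _) I'lb0
  have hfle : ∀ y, Real.exp (ℓ' y) ≤ Real.exp t * Real.exp (ℓ y) := fun y => by
    rw [← Real.exp_add]
    exact Real.exp_le_exp.2 (by have := (abs_le.1 (hdiff y)).2; linarith)
  have hfge : ∀ y, Real.exp (ℓ y) ≤ Real.exp t * Real.exp (ℓ' y) := fun y => by
    rw [← Real.exp_add]
    exact Real.exp_le_exp.2 (by have := (abs_le.1 (hdiff y)).1; linarith)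
  have I'lb : Real.exp (-t) * I ≤ I' := by
    rw [hI, ← integral_const_mul]
    refine integral_mono (int_f.const_mul _) int_f' fun y => ?_
    have h1 := hfge y
    have h2 : Real.exp (-t) * Real.exp t = 1 := by
      rw [← Real.exp_add]; simp
    nlinarith [Real.exp_pos (-t), Real.exp_pos (ℓ' y)]
  have Ilb' : Real.exp (-t) * I' ≤ I := by
    rw [hI', ← integral_const_mul]
    refine integral_mono (int_f'.const_mul _) int_f fun y => ?_
    have h1 := hfle y
    have h2 : Real.exp (-t) * Real.exp t = 1 := by
      rw [← Real.exp_add]; simp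
    nlinarith [Real.exp_pos (-t), Real.exp_pos (ℓ y)]
  have hexp2 : Real.exp t * Real.exp t = Real.exp (2 * t) := by
    rw [← Real.exp_add]; ring_nf
  have hA'le : ∀ y, Real.exp (ℓ' y) / I' ≤ Real.exp (2 * t) * (Real.exp (ℓ y) / I) := by
    intro y
    calc Real.exp (ℓ' y) / I' ≤ (Real.exp t * Real.exp (ℓ y)) / (Real.exp (-t) * I) :=
          div_le_div₀ (by positivity) (hfle y) (by positivity) I'lb
    _ = Real.exp (2 * t) * (Real.exp (ℓ y) / I) := by
        rw [Real.exp_neg, ← hexp2]; field_simp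
  have hAle : ∀ y, Real.exp (ℓ y) / I ≤ Real.exp (2 * t) * (Real.exp (ℓ' y) / I') := by
    intro y
    calc Real.exp (ℓ y) / I ≤ (Real.exp t * Real.exp (ℓ' y)) / (Real.exp (-t) * I') :=
          div_le_div₀ (by positivity) (hfge y) (by positivity) Ilb'
    _ = Real.exp (2 * t) * (Real.exp (ℓ' y) / I') := by
        rw [Real.exp_neg, ← hexp2]; field_simp
  have habs : ∀ y, |Real.exp (ℓ' y) / I' - Real.exp (ℓ y) / I| ≤
      (Real.exp (2 * t) - 1) * (Real.exp (ℓ y) / I) := by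
    intro y
    set A : ℝ := Real.exp (ℓ y) / I with hA
    set A' : ℝ := Real.exp (ℓ' y) / I' with hA'
    have hApos : 0 < A := by positivity
    have hA'pos : 0 < A' := by positivity
    have hu1 : 1 ≤ Real.exp (2 * t) := Real.one_le_exp (by linarith)
    rw [abs_sub_le_iff]
    constructor
    · nlinarith [hA'le y]
    · nlinarith [hAle y, sq_nonneg (Real.exp (2 * t) - 1)]
  -- integrability of the attention-weighted integrands
  have intA : Integrable (fun y => Real.exp (ℓ y) / I) μ := int_f.div_const I
  have intA' : Integrable (fun y => Real.exp (ℓ' y) / I') μ := int_f'.div_const I'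
  have hAub : ∀ y, Real.exp (ℓ y) / I ≤ Real.exp B / I := fun y =>
    (div_le_div_iff_of_pos_right Ipos).2 (Real.exp_le_exp.2 ((le_abs_self _).trans (hB y)))
  have hA'ub : ∀ y, Real.exp (ℓ' y) / I' ≤ Real.exp B / I' := fun y =>
    (div_le_div_iff_of_pos_right I'pos).2 (Real.exp_le_exp.2 ((le_abs_self _).trans (hB' y)))
  have hnv' : ∀ y, ‖w' y‖ ≤ a + b := fun y => by
    have h3 : ‖w' y‖ ≤ ‖w' y - w y‖ + ‖w y‖ := by
      have := norm_add_le (w' y - w y) (w y)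
      simpa using this
    exact h3.trans (add_le_add (hdv y) (hnv y))
  have intAw : Integrable (fun y => (Real.exp (ℓ y) / I) • w y) μ := by
    refine Integrable.mono' (integrable_const (Real.exp B / I * b))
      (intA.aestronglyMeasurable.smul hw) (ae_of_all _ fun y => ?_)
    rw [norm_smul, Real.norm_eq_abs, abs_of_pos (by positivity)]
    exact mul_le_mul (hAub y) (hnv y) (norm_nonneg _) (by positivity)
  have intA'w' : Integrable (fun y => (Real.exp (ℓ' y) / I') • w' y) μ := by
    refine Integrable.mono' (integrable_const (Real.exp B / I' * (a + b)))
      (intA'.aestronglyMeasurable.smul hw') (ae_of_all _ fun y => ?_)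
    rw [norm_smul, Real.norm_eq_abs, abs_of_pos (by positivity)]
    exact mul_le_mul (hA'ub y) (hnv' y) (norm_nonneg _) (by positivity)
  have hintA : (∫ y, Real.exp (ℓ y) / I ∂μ) = 1 := by
    rw [integral_div]; exact div_self Ipos.ne'
  have hintA' : (∫ y, Real.exp (ℓ' y) / I' ∂μ) = 1 := by
    rw [integral_div]; exact div_self I'pos.ne'
  rw [← integral_sub intA'w' intAw]
  have hbound : ∀ y, ‖(Real.exp (ℓ' y) / I') • w' y - (Real.exp (ℓ y) / I) • w y‖ ≤
      a * (Real.exp (ℓ' y) / I') + ((Real.exp (2 * t) - 1) * b) * (Real.exp (ℓ y) / I) := by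
    intro y
    set A : ℝ := Real.exp (ℓ y) / I with hA
    set A' : ℝ := Real.exp (ℓ' y) / I' with hA'
    have hApos : 0 ≤ A := by positivity
    have hA'pos : 0 ≤ A' := by positivity
    have hsplit : A' • w' y - A • w y = A' • (w' y - w y) + (A' - A) • w y := by
      rw [smul_sub, sub_smul]; abel
    rw [hsplit]
    calc ‖A' • (w' y - w y) + (A' - A) • w y‖
        ≤ ‖A' • (w' y - w y)‖ + ‖(A' - A) • w y‖ := norm_add_le _ _
    _ = A' * ‖w' y - w y‖ + |A' - A| * ‖w y‖ := by
        rw [norm_smul, norm_smul, Real.norm_eq_abs, Real.norm_eq_abs, abs_of_nonneg hA'pos]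
    _ ≤ A' * a + ((Real.exp (2 * t) - 1) * A) * b := by
        refine add_le_add (mul_le_mul_of_nonneg_left (hdv y) hA'pos) ?_
        exact mul_le_mul (habs y) (hnv y) (norm_nonneg _)
          (by nlinarith [Real.one_le_exp (by linarith : (0:ℝ) ≤ 2 * t)])
    _ = a * A' + ((Real.exp (2 * t) - 1) * b) * A := by ring
  calc ‖∫ y, ((Real.exp (ℓ' y) / I') • w' y - (Real.exp (ℓ y) / I) • w y) ∂μ‖
      ≤ ∫ y, (a * (Real.exp (ℓ' y) / I') + ((Real.exp (2 * t) - 1) * b) * (Real.exp (ℓ y) / I)) ∂μ := by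
        refine norm_integral_le_of_norm_le ?_ (ae_of_all _ hbound)
        exact (intA'.const_mul a).add (intA.const_mul _)
  _ = a + (Real.exp (2 * t) - 1) * b := by
      rw [integral_add (intA'.const_mul a) (intA.const_mul _), integral_const_mul,
        integral_const_mul, hintA, hintA']
      ring


set_option maxHeartbeats 1000000 in
/-- One-layer perturbation error: perturbing the hidden state `h ↦ h'` and the relative
positional encoding `p ↦ p'` changes the output of one attention layer by at most
`4·L_v·(L_logit·‖h‖_∞ + 1)·(2·sup_x ‖h(x) − h'(x)‖ + sup_{x,y} ‖p(x,y) − p'(x,y)‖)`,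
provided the total perturbation is at most `1/(2·L_logit)`. -/
theorem stmt5
    {χ : Type*} [MeasurableSpace χ]
    (μ : Measure χ) [IsProbabilityMeasure μ]
    (dh dp : ℕ)
    (logit : EuclideanSpace ℝ (Fin dh) → EuclideanSpace ℝ (Fin dh) →
      EuclideanSpace ℝ (Fin dp) → ℝ)
    (v : EuclideanSpace ℝ (Fin dh) → EuclideanSpace ℝ (Fin dh))
    (Llogit Lv : ℝ) (hLlogit : 0 ≤ Llogit) (hLv : 0 ≤ Lv)
    (hlogit : ∀ a b c a' b' c', |logit a b c - logit a' b' c'| ≤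
      Llogit * (‖a - a'‖ + ‖b - b'‖ + ‖c - c'‖))
    (hv : ∀ a b, ‖v a - v b‖ ≤ Lv * ‖a - b‖) (hv0 : v 0 = 0)
    (h h' : χ → EuclideanSpace ℝ (Fin dh))
    (p p' : χ → χ → EuclideanSpace ℝ (Fin dp))
    (hhmeas : Measurable h) (hh'meas : Measurable h')
    (hhbdd : ∃ M : ℝ, ∀ x, ‖h x‖ ≤ M) (hh'bdd : ∃ M : ℝ, ∀ x, ‖h' x‖ ≤ M)
    (hpmeas : Measurable fun q : χ × χ => p q.1 q.2)
    (hp'meas : Measurable fun q : χ × χ => p' q.1 q.2)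
    (hpbdd : ∃ M : ℝ, ∀ x y, ‖p x y‖ ≤ M) (hp'bdd : ∃ M : ℝ, ∀ x y, ‖p' x y‖ ≤ M)
    (hsmall : 2 * (⨆ x, ‖h x - h' x‖) + (⨆ q : χ × χ, ‖p q.1 q.2 - p' q.1 q.2‖) ≤
      1 / (2 * Llogit)) :
    ∀ x : χ,
      ‖(∫ y, (Real.exp (logit (h' x) (h' y) (p' x y)) /
            ∫ z, Real.exp (logit (h' x) (h' z) (p' x z)) ∂μ) • v (h' y) ∂μ) -
        (∫ y, (Real.exp (logit (h x) (h y) (p x y)) /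
            ∫ z, Real.exp (logit (h x) (h z) (p x z)) ∂μ) • v (h y) ∂μ)‖ ≤
      4 * Lv * (Llogit * (⨆ x', ‖h x'‖) + 1) *
        (2 * (⨆ x', ‖h x' - h' x'‖) + ⨆ q : χ × χ, ‖p q.1 q.2 - p' q.1 q.2‖) := by
  intro x
  -- χ is nonempty since μ is a probability measure
  have hne : Nonempty χ := by
    by_contra hc
    rw [not_nonempty_iff] at hc
    have h1 : μ Set.univ = 1 := measure_univ
    rw [Set.univ_eq_empty_iff.mpr hc] at h1
    simp at h1
  obtain ⟨Mh, hMh⟩ := hhbdd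
  obtain ⟨Mh', hMh'⟩ := hh'bdd
  obtain ⟨Mp, hMp⟩ := hpbdd
  obtain ⟨Mp', hMp'⟩ := hp'bdd
  set s1 := ⨆ x', ‖h x' - h' x'‖ with hs1def
  set s2 := ⨆ q : χ × χ, ‖p q.1 q.2 - p' q.1 q.2‖ with hs2def
  set H := ⨆ x', ‖h x'‖ with hHdef
  have hbdd1 : BddAbove (Set.range fun z => ‖h z - h' z‖) :=
    ⟨Mh + Mh', by rintro r ⟨z, rfl⟩; exact (norm_sub_le _ _).trans (add_le_add (hMh z) (hMh' z))⟩
  have hs1le : ∀ z, ‖h z - h' z‖ ≤ s1 := fun z => le_ciSup hbdd1 z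
  have hbdd2 : BddAbove (Set.range fun q : χ × χ => ‖p q.1 q.2 - p' q.1 q.2‖) :=
    ⟨Mp + Mp', by
      rintro r ⟨q, rfl⟩
      exact (norm_sub_le _ _).trans (add_le_add (hMp q.1 q.2) (hMp' q.1 q.2))⟩
  have hs2le : ∀ a b, ‖p a b - p' a b‖ ≤ s2 := fun a b => le_ciSup hbdd2 (a, b)
  have hbddH : BddAbove (Set.range fun z => ‖h z‖) :=
    ⟨Mh, by rintro r ⟨z, rfl⟩; exact hMh z⟩
  have hHle : ∀ z, ‖h z‖ ≤ H := fun z => le_ciSup hbddH z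
  have hs1nonneg : 0 ≤ s1 := (norm_nonneg _).trans (hs1le (Classical.arbitrary χ))
  have hs2nonneg : 0 ≤ s2 :=
    (norm_nonneg _).trans (hs2le (Classical.arbitrary χ) (Classical.arbitrary χ))
  have hHnonneg : 0 ≤ H := (norm_nonneg _).trans (hHle (Classical.arbitrary χ))
  set t := Llogit * (2 * s1 + s2) with htdef
  have ht0 : 0 ≤ t := by positivity
  have ht : t ≤ 1 / 2 := by
    rcases eq_or_lt_of_le hLlogit with hL | hL
    · rw [htdef, ← hL]; norm_num
    · have h2 : 0 < 2 * Llogit := by linarith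
      rw [le_div_iff₀ h2] at hsmall
      rw [htdef]; nlinarith
  -- continuity of logit and v
  have hlogitcont : Continuous fun u : (EuclideanSpace ℝ (Fin dh)) ×
      (EuclideanSpace ℝ (Fin dh)) × (EuclideanSpace ℝ (Fin dp)) => logit u.1 u.2.1 u.2.2 := by
    refine (LipschitzWith.of_dist_le_mul (K := ⟨3 * Llogit, by positivity⟩) fun u u' => ?_).continuous
    have h1 : dist u.1 u'.1 ≤ dist u u' := le_max_left _ _
    have h2a : dist u.2 u'.2 ≤ dist u u' := le_max_right _ _
    have h2 : dist u.2.1 u'.2.1 ≤ dist u u' := (le_max_left _ _).trans h2a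
    have h3 : dist u.2.2 u'.2.2 ≤ dist u u' := (le_max_right _ _).trans h2a
    rw [Real.dist_eq]
    calc |logit u.1 u.2.1 u.2.2 - logit u'.1 u'.2.1 u'.2.2|
        ≤ Llogit * (‖u.1 - u'.1‖ + ‖u.2.1 - u'.2.1‖ + ‖u.2.2 - u'.2.2‖) := hlogit _ _ _ _ _ _
    _ ≤ (⟨3 * Llogit, by positivity⟩ : NNReal) * dist u u' := by
        push_cast
        rw [← dist_eq_norm, ← dist_eq_norm, ← dist_eq_norm]
        nlinarith [dist_nonneg (x := u) (y := u')]
  have hvcont : Continuous v := by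
    refine (LipschitzWith.of_dist_le_mul (K := ⟨Lv, hLv⟩) fun a b => ?_).continuous
    rw [dist_eq_norm, dist_eq_norm]
    exact hv a b
  -- measurability of the logit slices
  have hslice : ∀ (g : χ → EuclideanSpace ℝ (Fin dh)) (q : χ → χ → EuclideanSpace ℝ (Fin dp)),
      Measurable g → Measurable (fun r : χ × χ => q r.1 r.2) →
      Measurable (fun y => logit (g x) (g y) (q x y)) := by
    intro g q hg hq
    have hqy : Measurable fun y => q x y := hq.comp (measurable_const.prodMk measurable_id)
    exact hlogitcont.measurable.comp (measurable_const.prodMk (hg.prodMk hqy))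
  -- bound on the logits
  have hMhnn : 0 ≤ Mh := (norm_nonneg _).trans (hMh (Classical.arbitrary χ))
  have hMh'nn : 0 ≤ Mh' := (norm_nonneg _).trans (hMh' (Classical.arbitrary χ))
  have hMpnn : 0 ≤ Mp :=
    (norm_nonneg _).trans (hMp (Classical.arbitrary χ) (Classical.arbitrary χ))
  have hMp'nn : 0 ≤ Mp' :=
    (norm_nonneg _).trans (hMp' (Classical.arbitrary χ) (Classical.arbitrary χ))
  set B := |logit 0 0 0| + Llogit * ((Mh + Mh') + (Mh + Mh') + (Mp + Mp')) with hBdef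
  have hlogB : ∀ (a b : EuclideanSpace ℝ (Fin dh)) (c : EuclideanSpace ℝ (Fin dp)),
      ‖a‖ ≤ Mh + Mh' → ‖b‖ ≤ Mh + Mh' → ‖c‖ ≤ Mp + Mp' → |logit a b c| ≤ B := by
    intro a b c hA hb hc
    have h1 : |logit a b c - logit 0 0 0| ≤ Llogit * (‖a‖ + ‖b‖ + ‖c‖) := by
      have := hlogit a b c 0 0 0
      simpa using this
    have h2 : |logit a b c| ≤ |logit a b c - logit 0 0 0| + |logit 0 0 0| := by
      have := abs_add_le (logit a b c - logit 0 0 0) (logit 0 0 0)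
      simpa using this
    have h3 : Llogit * (‖a‖ + ‖b‖ + ‖c‖) ≤
        Llogit * ((Mh + Mh') + (Mh + Mh') + (Mp + Mp')) := by
      apply mul_le_mul_of_nonneg_left _ hLlogit
      linarith
    rw [hBdef]; linarith
  have hB : ∀ y, |logit (h x) (h y) (p x y)| ≤ B := fun y =>
    hlogB _ _ _ (by linarith [hMh x]) (by linarith [hMh y]) (by linarith [hMp x y])
  have hB' : ∀ y, |logit (h' x) (h' y) (p' x y)| ≤ B := fun y =>
    hlogB _ _ _ (by linarith [hMh' x]) (by linarith [hMh' y]) (by linarith [hMp' x y])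
  -- logit difference bound
  have hdiff : ∀ y, |logit (h' x) (h' y) (p' x y) - logit (h x) (h y) (p x y)| ≤ t := by
    intro y
    calc |logit (h' x) (h' y) (p' x y) - logit (h x) (h y) (p x y)|
        ≤ Llogit * (‖h' x - h x‖ + ‖h' y - h y‖ + ‖p' x y - p x y‖) :=
          hlogit _ _ _ _ _ _
    _ ≤ Llogit * (2 * s1 + s2) := by
        apply mul_le_mul_of_nonneg_left _ hLlogit
        rw [norm_sub_rev (h' x), norm_sub_rev (h' y), norm_sub_rev (p' x y)]
        have := hs1le x; have := hs1le y; have := hs2le x y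
        linarith
  have hdv : ∀ y, ‖v (h' y) - v (h y)‖ ≤ Lv * s1 := fun y => by
    calc ‖v (h' y) - v (h y)‖ ≤ Lv * ‖h' y - h y‖ := hv _ _
    _ ≤ Lv * s1 := by
        rw [norm_sub_rev]
        exact mul_le_mul_of_nonneg_left (hs1le y) hLv
  have hnv : ∀ y, ‖v (h y)‖ ≤ Lv * H := fun y => by
    have h1 : ‖v (h y) - v 0‖ ≤ Lv * ‖h y - 0‖ := hv _ _
    rw [hv0, sub_zero, sub_zero] at h1
    exact h1.trans (mul_le_mul_of_nonneg_left (hHle y) hLv)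
  have hkey := attention_perturb_key μ
    (fun y => logit (h x) (h y) (p x y)) (fun y => logit (h' x) (h' y) (p' x y))
    (fun y => v (h y)) (fun y => v (h' y))
    (hslice h p hhmeas hpmeas) (hslice h' p' hh'meas hp'meas)
    B hB hB'
    ((hvcont.measurable.comp hhmeas).aestronglyMeasurable)
    ((hvcont.measurable.comp hh'meas).aestronglyMeasurable)
    t ht0 hdiff (Lv * s1) (Lv * H) (by positivity) (by positivity) hdv hnv
  refine hkey.trans ?_
  have hexp : Real.exp (2 * t) - 1 ≤ 4 * t := by
    have h2t0 : (0:ℝ) ≤ 2 * t := by linarith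
    have h2t1 : 2 * t ≤ 1 := by linarith
    have conv := convexOn_exp.2 (Set.mem_univ (0:ℝ)) (Set.mem_univ (1:ℝ))
      (by linarith : (0:ℝ) ≤ 1 - 2 * t) h2t0 (by ring)
    simp only [smul_eq_mul, mul_zero, mul_one, zero_add, Real.exp_zero] at conv
    have he : Real.exp 1 < 2.7182818286 := Real.exp_one_lt_d9
    nlinarith
  have h4 : Lv * s1 + (Real.exp (2 * t) - 1) * (Lv * H) ≤
      Lv * s1 + (4 * t) * (Lv * H) := by
    have hexpge : (0:ℝ) ≤ Real.exp (2 * t) - 1 := by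
      have := Real.one_le_exp (by linarith : (0:ℝ) ≤ 2 * t); linarith
    have := mul_le_mul_of_nonneg_right hexp (mul_nonneg hLv hHnonneg)
    linarith
  refine h4.trans ?_
  rw [htdef]
  nlinarith [mul_nonneg hLv hs1nonneg, mul_nonneg hLv hs2nonneg,
    mul_nonneg (mul_nonneg hLv hLlogit) (mul_nonneg hHnonneg hs1nonneg),
    mul_nonneg (mul_nonneg hLv hLlogit) (mul_nonneg hHnonneg hs2nonneg)]
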